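/- Let $A$ be a Noetherian local ring containing a field of characteristic zero, let $\mathfrak{D}$ be a set of derivations of $A$, and let $I$ be a maximally $\mathfrak{D}$-differential ideal of $A$. Then $I$ is a prime ideal of $A$. -/

import Mathlib

/-- `d` is a derivation of the commutative ring `A`: an additive endomorphism satisfying the
Leibniz rule `d(ab) = a·d(b) + b·d(a)`. -/
def IsDeriv {A : Type*} [CommRing A] (d : A →+ A) : Prop :=
  ∀ a b : A, d (a * b) = a * d b + b * d a

/-- An ideal `I` is `𝔇`-differential if `d(I) ⊆ I` for every `d ∈ 𝔇`. -/
def IsDiffIdeal {A : Type*} [CommRing A] (𝔇 : Set (A →+ A)) (I : Ideal A) : Prop :=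
  ∀ d ∈ 𝔇, ∀ x ∈ I, d x ∈ I

/-- An ideal `I` is maximally `𝔇`-differential if it is a proper `𝔇`-differential ideal and no
ideal `J` with `I ⊊ J ⊊ A` is `𝔇`-differential. -/
def IsMaxDiffIdeal {A : Type*} [CommRing A] (𝔇 : Set (A →+ A)) (I : Ideal A) : Prop :=
  I ≠ ⊤ ∧ IsDiffIdeal 𝔇 I ∧ ∀ J : Ideal A, I < J → J < ⊤ → ¬ IsDiffIdeal 𝔇 J

lemma IsDeriv.pow_succ {A : Type*} [CommRing A] {d : A →+ A} (hd : IsDeriv d)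
    (y : A) (k : ℕ) : d (y ^ (k + 1)) = ((k : A) + 1) * y ^ k * d y := by
  induction k with
  | zero => simp
  | succ k ih =>
    have : y ^ (k + 2) = y * y ^ (k + 1) := by ring
    rw [this, hd, ih]
    push_cast
    ring

lemma IsDeriv.mul_deriv_pow {A : Type*} [CommRing A] {d : A →+ A} (hd : IsDeriv d)
    (y : A) (k : ℕ) : y * d (y ^ k) = (k : A) * y ^ k * d y := by
  cases k with
  | zero =>
    have h1 : d (1 : A) = 0 := by
      have h := hd 1 1
      simp only [one_mul] at h
      nth_rewrite 1 [← add_zero (d 1)] at h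
      simpa using (add_left_cancel h).symm
    simp [h1]
  | succ k =>
    rw [hd.pow_succ]
    push_cast
    ring

/-- In a `ℚ`-algebra, `(n+1 : A) * y ∈ I → y ∈ I`. -/
lemma mem_of_natCast_mul_mem {A : Type*} [CommRing A] [Algebra ℚ A] {I : Ideal A}
    {y : A} {n : ℕ} (h : ((n : A) + 1) * y ∈ I) : y ∈ I := by
  have hne : ((n : ℚ) + 1) ≠ 0 := by positivity
  have key : algebraMap ℚ A (((n : ℚ) + 1)⁻¹) * (((n : A) + 1) * y) = y := by
    have hcast : ((n : A) + 1) = algebraMap ℚ A ((n : ℚ) + 1) := by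
      push_cast
      simp
    rw [← mul_assoc, hcast, ← map_mul, inv_mul_cancel₀ hne, map_one, one_mul]
  have := Ideal.mul_mem_left I (algebraMap ℚ A (((n : ℚ) + 1)⁻¹)) h
  rwa [key] at this

/-- Seidenberg: the radical of a differential ideal is differential (in a `ℚ`-algebra). -/
lemma radical_isDiffIdeal {A : Type*} [CommRing A] [Algebra ℚ A]
    (𝔇 : Set (A →+ A)) (h𝔇 : ∀ d ∈ 𝔇, IsDeriv d)
    {I : Ideal A} (hI : IsDiffIdeal 𝔇 I) : IsDiffIdeal 𝔇 I.radical := by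
  intro d hd x hx
  obtain ⟨n, hn⟩ := hx
  have hder := h𝔇 d hd
  -- key step: descend the power of `x`
  have key : ∀ m j : ℕ, x ^ (m + 1) * d x ^ (2 * j) ∈ I →
      x ^ m * d x ^ (2 * j + 2) ∈ I := by
    intro m j h
    have h1 : d (x ^ (m + 1) * d x ^ (2 * j)) ∈ I := hI d hd _ h
    have h2 : d x * d (x ^ (m + 1) * d x ^ (2 * j)) ∈ I := Ideal.mul_mem_left _ _ h1
    rw [hder] at h2
    -- d x * (x^(m+1) * d(dx^(2j)) + dx^(2j) * d(x^(m+1)))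
    have expand : d x * (x ^ (m + 1) * d (d x ^ (2 * j)) + d x ^ (2 * j) * d (x ^ (m + 1)))
        = x ^ (m + 1) * (d x * d (d x ^ (2 * j)))
          + ((m : A) + 1) * (x ^ m * d x ^ (2 * j + 2)) := by
      rw [hder.pow_succ]
      ring
    rw [expand] at h2
    have h3 : x ^ (m + 1) * (d x * d (d x ^ (2 * j))) ∈ I := by
      rw [hder.mul_deriv_pow]
      have : x ^ (m + 1) * ((2 * j : ℕ) * d x ^ (2 * j) * d (d x))
          = ((2 * j : ℕ) * d (d x)) * (x ^ (m + 1) * d x ^ (2 * j)) := by ring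
      rw [this]
      exact Ideal.mul_mem_left _ _ h
    have h4 : ((m : A) + 1) * (x ^ m * d x ^ (2 * j + 2)) ∈ I := by
      have := I.sub_mem h2 h3
      simpa using this
    exact mem_of_natCast_mul_mem h4
  have C : ∀ j : ℕ, j ≤ n → x ^ (n - j) * d x ^ (2 * j) ∈ I := by
    intro j
    induction j with
    | zero => intro _; simpa using hn
    | succ j ih =>
      intro hj
      have h1 := ih (le_of_lt hj)
      have heq : n - j = (n - (j + 1)) + 1 := by omega
      rw [heq] at h1
      have := key (n - (j + 1)) j h1
      have heq2 : 2 * (j + 1) = 2 * j + 2 := by ring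
      rw [heq2]
      exact this
  have := C n le_rfl
  simp only [Nat.sub_self, pow_zero, one_mul] at this
  exact ⟨2 * n, this⟩

/-- Let `A` be a Noetherian local ring containing a field of characteristic zero (i.e. a
`ℚ`-algebra), `𝔇` a set of derivations of `A`, and `I` a maximally `𝔇`-differential ideal
of `A`.  Then `I` is a prime ideal of `A`. -/
theorem maxDiffIdeal_isPrime_of_charZero
    {A : Type*} [CommRing A] [IsNoetherianRing A] [IsLocalRing A] [Algebra ℚ A]
    (𝔇 : Set (A →+ A)) (h𝔇 : ∀ d ∈ 𝔇, IsDeriv d)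
    (I : Ideal A) (hI : IsMaxDiffIdeal 𝔇 I) :
    I.IsPrime := by
  obtain ⟨hne, hdiff, hmax⟩ := hI
  -- Step 1: I is radical.
  have hrad : I.radical = I := by
    by_contra h
    have hle : I ≤ I.radical := Ideal.le_radical
    have hlt : I < I.radical := lt_of_le_of_ne hle (Ne.symm h)
    have hradne : I.radical ≠ ⊤ := by
      intro habs
      have : (1 : A) ∈ I.radical := habs ▸ Submodule.mem_top
      obtain ⟨k, hk⟩ := this
      exact hne (Ideal.eq_top_iff_one I |>.mpr (by simpa using hk))
    exact hmax I.radical hlt (lt_top_iff_ne_top.mpr hradne)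
      (radical_isDiffIdeal 𝔇 h𝔇 hdiff)
  -- Step 2: primality via colon ideals.
  constructor
  · exact hne
  · intro a b hab
    by_contra hcon
    push_neg at hcon
    obtain ⟨ha, hb⟩ := hcon
    -- consider J = (I : a)
    set J : Ideal A := I.colon (Ideal.span {a}) with hJ
    have memJ : ∀ y : A, y ∈ J ↔ a * y ∈ I := by
      intro y
      rw [hJ, Ideal.span, Submodule.mem_colon_span_singleton, smul_eq_mul, mul_comm]
    have hIJ : I ≤ J := by
      intro y hy
      rw [memJ]
      exact Ideal.mul_mem_left _ _ hy
    have hbJ : b ∈ J := (memJ b).mpr hab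
    have hJne : J ≠ ⊤ := by
      intro habs
      have : (1 : A) ∈ J := habs ▸ Submodule.mem_top
      rw [memJ, mul_one] at this
      exact ha this
    have hJdiff : IsDiffIdeal 𝔇 J := by
      intro d hd y hy
      rw [memJ] at hy ⊢
      have hder := h𝔇 d hd
      have h1 : d (a * y) ∈ I := hdiff d hd _ hy
      rw [hder] at h1
      have h2 : a * (a * d y + y * d a) ∈ I := Ideal.mul_mem_left _ _ h1
      have h3 : a * (y * d a) ∈ I := by
        have : a * (y * d a) = d a * (a * y) := by ring
        rw [this]
        exact Ideal.mul_mem_left _ _ hy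
      have h4 : a ^ 2 * d y ∈ I := by
        have := I.sub_mem h2 h3
        have heq : a * (a * d y + y * d a) - a * (y * d a) = a ^ 2 * d y := by ring
        rwa [heq] at this
      have h5 : (a * d y) ^ 2 ∈ I := by
        have heq : (a * d y) ^ 2 = d y * (a ^ 2 * d y) := by ring
        rw [heq]
        exact Ideal.mul_mem_left _ _ h4
      have h6 : a * d y ∈ I.radical := ⟨2, h5⟩
      rwa [hrad] at h6
    have hJI : J = I := by
      by_contra hne2
      have hlt : I < J := lt_of_le_of_ne hIJ (Ne.symm hne2)
      exact hmax J hlt (lt_top_iff_ne_top.mpr hJne) hJdiff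
    exact hb (hJI ▸ hbJ)
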